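/- arXiv:2310.08972 — 2 statements merged into one kernel-verified Lean document; each statement's English description precedes it below -/
import Mathlib

section
/- The reduced plane curve C' : x(x + y)(xy − z²) = 0 in P² is a nearly free curve with exponents (2,2,2), i.e. D₀(f') is minimally generated by three homogeneous syzygies, each of degree 2. -/
open MvPolynomial Module

noncomputable section

abbrev S3 := MvPolynomial (Fin 3) ℂ
abbrev R2 := MvPolynomial (Fin 2) ℂ
abbrev PP2 := Projectivization ℂ (Fin 3 → ℂ)

/-- The graded `S`-module of Jacobian syzygies of `f`:
`D₀(f) = {(a,b,c) ∈ S³ : a f_x + b f_y + c f_z = 0}`. -/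
def D0 (f : S3) : Submodule S3 (Fin 3 → S3) where
  carrier := {a | ∑ i : Fin 3, a i * pderiv i f = 0}
  add_mem' := by
    intro a b ha hb
    simp only [Set.mem_setOf_eq, Pi.add_apply, add_mul, Finset.sum_add_distrib] at *
    rw [ha, hb, add_zero]
  zero_mem' := by simp
  smul_mem' := by
    intro c a ha
    simp only [Set.mem_setOf_eq, Pi.smul_apply, smul_eq_mul, mul_assoc, ← Finset.mul_sum] at *
    rw [ha, mul_zero]

/-- `D0 f` admits a minimal system of homogeneous generators whose (sorted) list of
degrees, i.e. the exponents of the curve `f = 0`, is `ds`. -/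
def HasExponents (f : S3) (ds : List ℕ) : Prop :=
  ds.Pairwise (· ≤ ·) ∧
  ∃ r : Fin ds.length → (Fin 3 → S3),
    (∀ j, r j ∈ D0 f) ∧
    (∀ j i, (r j i).IsHomogeneous (ds.get j)) ∧
    Submodule.span S3 (Set.range r) = D0 f ∧
    (∀ (n : ℕ) (r' : Fin n → (Fin 3 → S3)),
       Submodule.span S3 (Set.range r') = D0 f → ds.length ≤ n)

/-- A reduced plane curve is free when `D0 f` has a minimal system of two
homogeneous generators. -/
def IsFreeCurve (f : S3) : Prop := ∃ d₁ d₂ : ℕ, HasExponents f [d₁, d₂]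

/-- The curve `f = 0` is plus-one generated with exponents `(a, b, c)`:
it is a 3-syzygy curve with `d₁ + d₂ = d`. -/
def PlusOneGenExps (f : S3) (a b c : ℕ) : Prop :=
  HasExponents f [a, b, c] ∧ a + b = f.totalDegree

/-- The curve `f = 0` is plus-one generated. -/
def IsPlusOneGen (f : S3) : Prop := ∃ a b c : ℕ, PlusOneGenExps f a b c

/-- A nearly free curve is a plus-one generated curve with `d₂ = d₃`. -/
def IsNearlyFree (f : S3) : Prop := ∃ a b : ℕ, PlusOneGenExps f a b b

/-- The minimal degree of a nonzero Jacobian syzygy of `f`, i.e. the smallest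
exponent `d₁` of the curve `f = 0`. -/
def mdr (f : S3) : ℕ :=
  sInf {k | ∃ a ∈ D0 f, a ≠ 0 ∧ ∀ i, (a i : S3).IsHomogeneous k}

/-- The set of points of the projective plane curve defined by a homogeneous `f`. -/
def projZeros (f : S3) : Set PP2 := {q | eval q.rep f = 0}

/-- The number of intersection points `r = |C ∩ D|` of the curves `f = 0`, `g = 0`. -/
def interCount (f g : S3) : ℕ := (projZeros f ∩ projZeros g).ncard

/-- The maximal ideal of polynomials vanishing at the point `p` of the affine plane. -/
def ptIdeal (p : Fin 2 → ℂ) : Ideal R2 := RingHom.ker (aeval p : R2 →ₐ[ℂ] ℂ)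

instance (p : Fin 2 → ℂ) : (ptIdeal p).IsPrime := RingHom.ker_isPrime _

/-- The local ring of the affine plane at the point `p`. -/
abbrev LocalAt (p : Fin 2 → ℂ) := Localization.AtPrime (ptIdeal p)

/-- The local Milnor number of the affine curve `g = 0` at the point `p`. -/
def localMu (g : R2) (p : Fin 2 → ℂ) : ℕ :=
  finrank ℂ (LocalAt p ⧸ Ideal.span
    {algebraMap R2 (LocalAt p) (pderiv 0 g), algebraMap R2 (LocalAt p) (pderiv 1 g)})

/-- The local Tjurina number of the affine curve `g = 0` at the point `p`. -/
def localTau (g : R2) (p : Fin 2 → ℂ) : ℕ :=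
  finrank ℂ (LocalAt p ⧸ Ideal.span
    {algebraMap R2 (LocalAt p) g,
     algebraMap R2 (LocalAt p) (pderiv 0 g), algebraMap R2 (LocalAt p) (pderiv 1 g)})

/-- The substitution realizing the `i`-th standard affine chart of `P²`. -/
def chartVars (i : Fin 3) : Fin 3 → R2 :=
  ![![1, X 0, X 1], ![X 0, 1, X 1], ![X 0, X 1, 1]] i

/-- Dehomogenization of `f` in the `i`-th standard affine chart. -/
def dehom (i : Fin 3) (f : S3) : R2 := aeval (chartVars i) f

/-- The affine coordinates, in the `i`-th standard chart, of the point with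
homogeneous coordinates `v`. -/
def affPt (i : Fin 3) (v : Fin 3 → ℂ) : Fin 2 → ℂ :=
  ![![v 1 / v 0, v 2 / v 0], ![v 0 / v 1, v 2 / v 1], ![v 0 / v 2, v 1 / v 2]] i

open Classical in
/-- A standard affine chart containing the projective point `q`. -/
def chartOf (q : PP2) : Fin 3 :=
  if q.rep 2 ≠ 0 then 2 else if q.rep 1 ≠ 0 then 1 else 0

/-- The Milnor number `μ(C, q)` of the plane curve `C : f = 0` at the point `q`. -/
def muP (f : S3) (q : PP2) : ℕ := localMu (dehom (chartOf q) f) (affPt (chartOf q) q.rep)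

/-- The Tjurina number `τ(C, q)` of the plane curve `C : f = 0` at the point `q`. -/
def tauP (f : S3) (q : PP2) : ℕ := localTau (dehom (chartOf q) f) (affPt (chartOf q) q.rep)

/-- `ε(C, q) = μ(C, q) − τ(C, q)`. -/
def epsP (f : S3) (q : PP2) : ℤ := (muP f q : ℤ) - tauP f q

/-- `ε(C, D) = ∑_{q ∈ C ∩ D} (ε(C ∪ D, q) − ε(C, q))`, for `C : f = 0`, `D : g = 0`. -/
def epsPair (f g : S3) : ℤ :=
  ∑ᶠ q ∈ projZeros f ∩ projZeros g, (epsP (g * f) q - epsP f q)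

/-- The set of singular points of the plane curve `f = 0`. -/
def singSet (f : S3) : Set PP2 := {q | ∀ i, eval q.rep (pderiv i f) = 0}

/-- The total Tjurina number of the plane curve `f = 0`. -/
def totalTau (f : S3) : ℕ := ∑ᶠ q ∈ singSet f, tauP f q

/-- Triples of polynomials all homogeneous of degree `k`, as a `ℂ`-subspace. -/
def homogTriples (k : ℕ) : Submodule ℂ (Fin 3 → S3) where
  carrier := {a | ∀ i, (a i).IsHomogeneous k}
  add_mem' := fun ha hb i => (ha i).add (hb i)
  zero_mem' := fun i => isHomogeneous_zero _ _ _
  smul_mem' := by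
    intro c a ha i
    rw [Pi.smul_apply, MvPolynomial.smul_eq_C_mul]
    simpa using (isHomogeneous_C _ c).mul (ha i)

/-- The degree `k` homogeneous part of `D0 f`, as a `ℂ`-vector space. -/
def D0h (f : S3) (k : ℕ) : Submodule ℂ (Fin 3 → S3) :=
  (D0 f).restrictScalars ℂ ⊓ homogTriples k

/-- `dim_ℂ D0(f)_k`. -/
def hilbD0 (f : S3) (k : ℕ) : ℕ := finrank ℂ (D0h f k)

/-- `dim_ℂ D0(f)_k` for an integer `k` (zero in negative degrees). -/
def hilbD0Z (f : S3) (k : ℤ) : ℕ := if 0 ≤ k then hilbD0 f k.toNat else 0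

/-- The Jacobian ideal of `f`. -/
def Jf (f : S3) : Ideal S3 := Ideal.span {pderiv 0 f, pderiv 1 f, pderiv 2 f}

/-- The irrelevant maximal ideal of `S`. -/
def mIrr : Ideal S3 := Ideal.span {X 0, X 1, X 2}

/-- The saturation `I_f` of the Jacobian ideal with respect to `(x,y,z)`. -/
def Isat (f : S3) : Ideal S3 := ⨆ n : ℕ, (Jf f).colon ((mIrr ^ n : Ideal S3) : Set S3)

/-- Homogeneous polynomials of degree `k`, as a `ℂ`-subspace of `S`. -/
def homogPoly (k : ℕ) : Submodule ℂ S3 where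
  carrier := {g | g.IsHomogeneous k}
  add_mem' := fun ha hb => ha.add hb
  zero_mem' := isHomogeneous_zero _ _ _
  smul_mem' := by
    intro c g hg
    rw [MvPolynomial.smul_eq_C_mul]
    simpa using (isHomogeneous_C _ c).mul hg

/-- `n(f)_k = dim_ℂ N(f)_k`, where `N(f) = I_f / J_f` is the Jacobian module. -/
def nfDim (f : S3) (k : ℕ) : ℕ :=
  finrank ℂ ((Submodule.restrictScalars ℂ (Isat f) ⊓ homogPoly k : Submodule ℂ S3))
    - finrank ℂ ((Submodule.restrictScalars ℂ (Jf f) ⊓ homogPoly k : Submodule ℂ S3))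

/-- `n(f)_k` for an integer `k` (zero in negative degrees). -/
def nfDimZ (f : S3) (k : ℤ) : ℕ := if 0 ≤ k then nfDim f k.toNat else 0

/-- A homogeneous `f` defines a smooth projective plane curve. -/
def IsSmoothCurve (f : S3) : Prop :=
  ∀ v : Fin 3 → ℂ, v ≠ 0 → ¬ (∀ i, eval v (pderiv i f) = 0)

/-- The homogenization `f(x,y,z) = z^d g(x/z, y/z)` of a degree `d` polynomial `g`
in two variables. -/
def homogz (d : ℕ) (g : R2) : S3 :=
  ∑ m ∈ g.support,
    monomial (Finsupp.equivFunOnFinite.symm ![m 0, m 1, d - (m 0 + m 1)]) (coeff m g)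

/-- A function on a (quasi-affine) subset `A` of `ℂ³` is regular if it is locally
a ratio of polynomials with non-vanishing denominator. -/
def IsRegularOn (A : Set (Fin 3 → ℂ)) (h : (Fin 3 → ℂ) → ℂ) : Prop :=
  ∀ v ∈ A, ∃ P Q : S3, eval v Q ≠ 0 ∧
    ∀ w ∈ A, eval w Q ≠ 0 → h w = eval w P / eval w Q

/-- `A` and `B` are isomorphic as complex algebraic varieties. -/
def IsIsoVar (A B : Set (Fin 3 → ℂ)) : Prop :=
  ∃ F G : (Fin 3 → ℂ) → (Fin 3 → ℂ),
    Set.MapsTo F A B ∧ Set.MapsTo G B A ∧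
    (∀ i, IsRegularOn A (fun v => F v i)) ∧
    (∀ i, IsRegularOn B (fun w => G w i)) ∧
    (∀ v ∈ A, G (F v) = v) ∧ (∀ w ∈ B, F (G w) = w)


namespace NFaux


def F : S3 := X 0 * (X 0 + X 1) * (X 0 * X 1 - X 2 ^ 2)

lemma hFx : pderiv 0 F = 3*X 0^2*X 1 + 2*X 0*X 1^2 - 2*X 0*X 2^2 - X 1*X 2^2 := by
  simp [F, pderiv_mul, pderiv_X_self, pderiv_X_of_ne, pderiv_pow]; ring
lemma hFy : pderiv 1 F = X 0^3 + 2*X 0^2*X 1 - X 0*X 2^2 := by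
  simp [F, pderiv_mul, pderiv_X_self, pderiv_X_of_ne, pderiv_pow]; ring
lemma hFz : pderiv 2 F = -(2*X 0^2*X 2) - 2*X 0*X 1*X 2 := by
  simp [F, pderiv_mul, pderiv_X_self, pderiv_X_of_ne, pderiv_pow]; ring

lemma ne_zero_of_eval (p : S3) (v : Fin 3 → ℂ) (h : eval v p ≠ 0) : p ≠ 0 :=
  fun hp => h (by simp [hp])

/-- division by a "linear form" via substitution -/
lemma dvd_sub_aeval (l : S3) (g : Fin 3 → S3) (hg : ∀ n, l ∣ X n - g n) (p : S3) :
    l ∣ p - aeval g p := by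
  induction p using MvPolynomial.induction_on with
  | C a => simp
  | add p q hp hq =>
      have : p + q - aeval g (p + q) = (p - aeval g p) + (q - aeval g q) := by
        simp only [map_add]; ring
      rw [this]; exact dvd_add hp hq
  | mul_X p n hp =>
      have : p * X n - aeval g (p * X n) =
          p * (X n - g n) + (p - aeval g p) * g n := by
        simp only [map_mul, aeval_X]; ring
      rw [this]; exact dvd_add ((hg n).mul_left p) (hp.mul_right _)

def sx : S3 →ₐ[ℂ] S3 := aeval ![0, X 1, X 2]
def sz : S3 →ₐ[ℂ] S3 := aeval ![X 0, X 1, 0]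
def sxy : S3 →ₐ[ℂ] S3 := aeval ![X 0, -X 0, X 2]
def sx2y : S3 →ₐ[ℂ] S3 := aeval ![-(2*X 1), X 1, X 2]

lemma dvd_x (p : S3) (h : sx p = 0) : X 0 ∣ p := by
  have := dvd_sub_aeval (X 0) ![0, X 1, X 2] (by
    intro n; fin_cases n <;> simp) p
  rw [show aeval ![0, X 1, X 2] p = sx p from rfl, h, sub_zero] at this; exact this

lemma dvd_z (p : S3) (h : sz p = 0) : X 2 ∣ p := by
  have := dvd_sub_aeval (X 2) ![X 0, X 1, 0] (by
    intro n; fin_cases n <;> simp) p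
  rw [show aeval ![X 0, X 1, 0] p = sz p from rfl, h, sub_zero] at this; exact this

lemma dvd_xy (p : S3) (h : sxy p = 0) : X 0 + X 1 ∣ p := by
  have := dvd_sub_aeval (X 0 + X 1) ![X 0, -X 0, X 2] (by
    intro n; fin_cases n
    · simp
    · show (X 0 + X 1 : S3) ∣ X 1 - -X 0
      exact ⟨1, by ring⟩
    · simp) p
  rw [show aeval ![X 0, -X 0, X 2] p = sxy p from rfl, h, sub_zero] at this; exact this

lemma dvd_x2y (p : S3) (h : sx2y p = 0) : X 0 + 2*X 1 ∣ p := by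
  have := dvd_sub_aeval (X 0 + 2*X 1) ![-(2*X 1), X 1, X 2] (by
    intro n; fin_cases n
    · show (X 0 + 2*X 1 : S3) ∣ X 0 - -(2*X 1)
      exact ⟨1, by ring⟩
    · simp
    · simp) p
  rw [show aeval ![-(2*X 1), X 1, X 2] p = sx2y p from rfl, h, sub_zero] at this; exact this

def R1 : Fin 3 → S3 := ![X 0*(X 0+2*X 1), -(X 1*(3*X 0+2*X 1)), -(X 0*X 2)]
def R2 : Fin 3 → S3 := ![2*(X 0*X 2), -(2*(X 0*X 2)), -(X 0^2) + 2*(X 0*X 1) - X 2^2]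
def R3 : Fin 3 → S3 := ![0, 2*(X 2*(X 0+X 1)), X 0^2 + 2*(X 0*X 1) - X 2^2]

lemma hR1 : R1 0 * pderiv 0 F + R1 1 * pderiv 1 F + R1 2 * pderiv 2 F = 0 := by
  rw [hFx, hFy, hFz]; show (X 0*(X 0+2*X 1)) * _ + (-(X 1*(3*X 0+2*X 1))) * _ + (-(X 0*X 2)) * _ = 0
  ring
lemma hR2 : R2 0 * pderiv 0 F + R2 1 * pderiv 1 F + R2 2 * pderiv 2 F = 0 := by
  rw [hFx, hFy, hFz]
  show (2*(X 0*X 2)) * _ + (-(2*(X 0*X 2))) * _ + (-(X 0^2) + 2*(X 0*X 1) - X 2^2) * _ = 0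
  ring
lemma hR3 : R3 0 * pderiv 0 F + R3 1 * pderiv 1 F + R3 2 * pderiv 2 F = 0 := by
  rw [hFx, hFy, hFz]
  show (0:S3) * _ + (2*(X 2*(X 0+X 1))) * _ + (X 0^2 + 2*(X 0*X 1) - X 2^2) * _ = 0
  ring

lemma two_C_mul {p : S3} {m : ℕ} (h : p.IsHomogeneous m) : ((2:S3)*p).IsHomogeneous m := by
  rw [show ((2:S3)) = C (2:ℂ) from (map_ofNat C 2).symm]; exact h.C_mul 2
lemma three_C_mul {p : S3} {m : ℕ} (h : p.IsHomogeneous m) : ((3:S3)*p).IsHomogeneous m := by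
  rw [show ((3:S3)) = C (3:ℂ) from (map_ofNat C 3).symm]; exact h.C_mul 3

lemma hX : ∀ i : Fin 3, (X i : S3).IsHomogeneous 1 := fun i => isHomogeneous_X ℂ i

lemma hR1hom : ∀ i, (R1 i).IsHomogeneous 2 := by
  intro i; fin_cases i
  · exact (hX 0).mul ((hX 0).add (two_C_mul (hX 1)))
  · exact ((hX 1).mul ((three_C_mul (hX 0)).add (two_C_mul (hX 1)))).neg
  · exact ((hX 0).mul (hX 2)).neg

lemma hR2hom : ∀ i, (R2 i).IsHomogeneous 2 := by
  intro i; fin_cases i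
  · exact two_C_mul ((hX 0).mul (hX 2))
  · exact (two_C_mul ((hX 0).mul (hX 2))).neg
  · exact (((isHomogeneous_X_pow (R := ℂ) 0 2).neg.add (two_C_mul ((hX 0).mul (hX 1)))).sub
      (isHomogeneous_X_pow (R := ℂ) 2 2))

lemma hR3hom : ∀ i, (R3 i).IsHomogeneous 2 := by
  intro i; fin_cases i
  · exact isHomogeneous_zero _ _ _
  · exact two_C_mul ((hX 2).mul ((hX 0).add (hX 1)))
  · exact (((isHomogeneous_X_pow (R := ℂ) 0 2).add (two_C_mul ((hX 0).mul (hX 1)))).sub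
      (isHomogeneous_X_pow (R := ℂ) 2 2))

lemma sx_X0 : sx (X 0) = 0 := by simp [sx]
lemma sx_X1 : sx (X 1) = X 1 := by simp [sx]
lemma sx_X2 : sx (X 2) = X 2 := by simp [sx]
lemma sz_X0 : sz (X 0) = X 0 := by simp [sz]
lemma sz_X1 : sz (X 1) = X 1 := by simp [sz]
lemma sz_X2 : sz (X 2) = 0 := by simp [sz]
lemma sxy_X0 : sxy (X 0) = X 0 := by simp [sxy]
lemma sxy_X1 : sxy (X 1) = -X 0 := by simp [sxy]
lemma sxy_X2 : sxy (X 2) = X 2 := by simp [sxy]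
lemma sx2y_X0 : sx2y (X 0) = -(2*X 1) := by simp [sx2y]
lemma sx2y_X1 : sx2y (X 1) = X 1 := by simp [sx2y]
lemma sx2y_X2 : sx2y (X 2) = X 2 := by simp [sx2y]

lemma dvd_sub_sx (p : S3) : X 0 ∣ p - sx p :=
  dvd_sub_aeval _ _ (by intro n; fin_cases n <;> simp) p
lemma dvd_sub_sz (p : S3) : X 2 ∣ p - sz p :=
  dvd_sub_aeval _ _ (by intro n; fin_cases n <;> simp) p
lemma dvd_sub_sxy (p : S3) : X 0 + X 1 ∣ p - sxy p :=
  dvd_sub_aeval _ _ (by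
    intro n; fin_cases n
    · simp
    · show (X 0 + X 1 : S3) ∣ X 1 - -X 0
      exact ⟨1, by ring⟩
    · simp) p
lemma dvd_sub_sx2y (p : S3) : X 0 + 2*X 1 ∣ p - sx2y p :=
  dvd_sub_aeval _ _ (by
    intro n; fin_cases n
    · show (X 0 + 2*X 1 : S3) ∣ X 0 - -(2*X 1)
      exact ⟨1, by ring⟩
    · simp
    · simp) p

lemma generation (a b c : S3)
    (hE : a * (3*X 0^2*X 1 + 2*X 0*X 1^2 - 2*X 0*X 2^2 - X 1*X 2^2)
        + b * (X 0^3 + 2*X 0^2*X 1 - X 0*X 2^2)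
        + c * (-(2*X 0^2*X 2) - 2*X 0*X 1*X 2) = 0) :
    ∃ u q2 q3 : S3,
      a = u * R1 0 + q2 * R2 0 + q3 * R3 0 ∧
      b = u * R1 1 + q2 * R2 1 + q3 * R3 1 := by
  have hx0 : (X 0 : S3) ≠ 0 := ne_zero_of_eval _ ![1,1,1] (by simp)
  have hx2 : (X 2 : S3) ≠ 0 := ne_zero_of_eval _ ![1,1,1] (by simp)
  -- step 1 : X 0 ∣ a
  have h1 := congrArg (⇑sx) hE
  simp only [map_add, map_mul, map_sub, map_pow, map_ofNat, map_zero,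
    map_neg, sx_X0, sx_X1, sx_X2] at h1
  have hEx : sx a * (X 1 * X 2^2) = 0 := by linear_combination -h1
  have hsxa : sx a = 0 :=
    (mul_eq_zero.mp hEx).resolve_right (ne_zero_of_eval _ ![1,1,1] (by simp))
  obtain ⟨a', ha'⟩ : X 0 ∣ a := by
    have := dvd_sub_sx a; rwa [hsxa, sub_zero] at this
  -- step 2 : mod z analysis
  have hsza : sz a = X 0 * sz a' := by rw [ha', map_mul, sz_X0]
  have h2 := congrArg (⇑sz) hE
  simp only [map_add, map_mul, map_sub, map_pow, map_ofNat, map_zero,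
    map_neg, sz_X0, sz_X1, sz_X2] at h2
  have hGbig : X 0^2 * (sz a' * (X 1*(3*X 0+2*X 1)) + sz b * (X 0+2*X 1)) = 0 := by
    linear_combination h2 - (3*X 0^2*X 1 + 2*X 0*X 1^2)*hsza
  have hG : sz a' * (X 1*(3*X 0+2*X 1)) + sz b * (X 0+2*X 1) = 0 :=
    (mul_eq_zero.mp hGbig).resolve_left (pow_ne_zero 2 hx0)
  -- step 3 : x+2y divides sz a'
  have h3 := congrArg (⇑sx2y) hG
  simp only [map_add, map_mul, map_sub, map_neg, map_pow, map_ofNat, map_zero,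
    sx2y_X0, sx2y_X1, sx2y_X2] at h3
  have h3' : sx2y (sz a') * (4*X 1^2) = 0 := by linear_combination -h3
  have hsza' : sx2y (sz a') = 0 :=
    (mul_eq_zero.mp h3').resolve_right (ne_zero_of_eval _ ![0,1,0] (by simp))
  obtain ⟨u, hu⟩ : X 0 + 2*X 1 ∣ sz a' := by
    have := dvd_sub_sx2y (sz a'); rwa [hsza', sub_zero] at this
  -- step 4 : value of sz b
  have hszb : sz b = -(X 1*(3*X 0+2*X 1))*u := by
    have h4 : (X 0+2*X 1) * (sz b + X 1*(3*X 0+2*X 1)*u) = 0 := by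
      linear_combination hG - (X 1*(3*X 0+2*X 1))*hu
    have := (mul_eq_zero.mp h4).resolve_left (ne_zero_of_eval _ ![1,0,0] (by simp))
    linear_combination this
  -- step 5 : divisions by z
  obtain ⟨a₁, ha₁⟩ := dvd_sub_sz a'
  obtain ⟨b₁, hb₁⟩ := dvd_sub_sz b
  -- step 6 : x+y divides
  have h5 := congrArg (⇑sxy) hE
  simp only [map_add, map_mul, map_sub, map_neg, map_pow, map_ofNat, map_zero,
    sxy_X0, sxy_X1, sxy_X2] at h5
  have h6 : (sxy a + sxy b) * (X 0^3 + X 0*X 2^2) = 0 := by linear_combination -h5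
  have hxyab : sxy a + sxy b = 0 :=
    (mul_eq_zero.mp h6).resolve_right (ne_zero_of_eval _ ![1,1,1] (by simp))
  have hab : a + b = (X 0+X 1)*((X 0-2*X 1)*u) + X 2*(X 0*a₁ + b₁) := by
    linear_combination ha' + X 0*ha₁ + X 0*hu + hb₁ + hszb
  have h7 := congrArg (⇑sxy) hab
  simp only [map_add, map_mul, map_sub, map_neg, map_pow, map_ofNat, map_zero,
    sxy_X0, sxy_X1, sxy_X2] at h7
  have h8 : X 2 * (X 0 * sxy a₁ + sxy b₁) = 0 := by linear_combination hxyab - h7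
  have h9 : sxy (X 0*a₁ + b₁) = 0 := by
    have := (mul_eq_zero.mp h8).resolve_left hx2
    simp only [map_add, map_mul, sxy_X0]; exact this
  obtain ⟨w, hw⟩ : X 0 + X 1 ∣ X 0*a₁ + b₁ := by
    have := dvd_sub_sxy (X 0*a₁ + b₁); rwa [h9, sub_zero] at this
  -- assembly
  have hhalf : (C (2⁻¹:ℂ) : S3) * 2 = 1 := by
    rw [show ((2:S3)) = C (2:ℂ) from (map_ofNat C 2).symm, ← map_mul]
    norm_num
  refine ⟨u, C (2⁻¹:ℂ) * a₁, C (2⁻¹:ℂ) * w, ?_, ?_⟩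
  · show a = u * (X 0*(X 0+2*X 1)) + C (2⁻¹:ℂ) * a₁ * (2*(X 0*X 2)) + C (2⁻¹:ℂ) * w * 0
    linear_combination ha' + X 0*ha₁ + X 0*hu - (X 0*X 2*a₁)*hhalf
  · show b = u * (-(X 1*(3*X 0+2*X 1))) + C (2⁻¹:ℂ) * a₁ * (-(2*(X 0*X 2)))
        + C (2⁻¹:ℂ) * w * (2*(X 2*(X 0+X 1)))
    linear_combination hb₁ + hszb + X 2*hw + (X 0*X 2*a₁ - X 2*(X 0+X 1)*w)*hhalf



lemma weight_one_apply (d : Fin 3 →₀ ℕ) : (Finsupp.weight (1 : Fin 3 → ℕ)) d = d 0 + d 1 + d 2 := by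
  rw [show (1 : Fin 3 → ℕ) = fun _ => 1 from rfl, ← Finsupp.degree_eq_weight_one]
  show ∑ i ∈ d.support, d i = _
  rw [Finset.sum_subset (Finset.subset_univ d.support)
    (by intro x _ hx; simpa using Finsupp.notMem_support_iff.mp hx)]
  rw [Fin.sum_univ_three]

lemma isHomogeneous_of_X_mul {i : Fin 3} {p : S3} {n : ℕ}
    (h : (X i * p).IsHomogeneous (n+1)) : p.IsHomogeneous n := by
  intro d hd
  have h2 : coeff (Finsupp.single i 1 + d) (X i * p) ≠ 0 := by rwa [coeff_X_mul]
  have h3 := h h2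
  simp only [map_add, weight_one_apply] at h3 ⊢
  fin_cases i <;> simp [Finsupp.single_apply] at h3 <;> omega

lemma eq_C_of_isHomogeneous_zero {p : S3} (hp : p.IsHomogeneous 0) : p = C (coeff 0 p) := by
  apply MvPolynomial.ext
  intro d
  by_cases hd : d = 0
  · subst hd; simp
  · rw [coeff_C, if_neg (Ne.symm hd),
      hp.coeff_eq_zero (by rwa [Ne, Finsupp.degree_eq_zero_iff])]

lemma hc_mul_left {p : S3} {j : ℕ} (hp : p.IsHomogeneous j) (q : S3) (m : ℕ) :
    homogeneousComponent (j+m) (p*q) = p * homogeneousComponent m q := by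
  conv_lhs => rw [← sum_homogeneousComponent q, Finset.mul_sum, map_sum]
  have hterm : ∀ k, homogeneousComponent (j+m) (p * homogeneousComponent k q)
      = if k = m then p * homogeneousComponent k q else 0 := by
    intro k
    rw [homogeneousComponent_of_mem (hp.mul (homogeneousComponent_isHomogeneous k q))]
    congr 1
    simp only [eq_iff_iff]
    omega
  simp_rw [hterm]
  rw [Finset.sum_ite_eq' (Finset.range (q.totalDegree + 1)) m
    (fun k => p * homogeneousComponent k q)]
  by_cases hm : m ∈ Finset.range (q.totalDegree + 1)
  · rw [if_pos hm]
  · rw [if_neg hm, homogeneousComponent_eq_zero _ q (by simpa using Nat.lt_of_succ_le (not_lt.mp (by simpa [Finset.mem_range] using hm))), mul_zero]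

lemma hc_mul_left_zero {p : S3} {j n : ℕ} (hp : p.IsHomogeneous j) (q : S3) (hn : n < j) :
    homogeneousComponent n (p*q) = 0 := by
  conv_lhs => rw [← sum_homogeneousComponent q, Finset.mul_sum, map_sum]
  apply Finset.sum_eq_zero
  intro k _
  rw [homogeneousComponent_of_mem (hp.mul (homogeneousComponent_isHomogeneous k q)), if_neg]
  omega


lemma pi2_mul (p q : S3) (h0 : homogeneousComponent 0 q = 0)
    (h1 : homogeneousComponent 1 q = 0) :
    homogeneousComponent 2 (p * q) = homogeneousComponent 0 p * homogeneousComponent 2 q := by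
  conv_lhs => rw [← sum_homogeneousComponent p, Finset.sum_mul, map_sum]
  have hterm : ∀ j, homogeneousComponent 2 (homogeneousComponent j p * q)
      = if j = 0 then homogeneousComponent 0 p * homogeneousComponent 2 q else 0 := by
    intro j
    match j with
    | 0 =>
      rw [if_pos rfl]
      exact hc_mul_left (homogeneousComponent_isHomogeneous 0 p) q 2
    | 1 =>
      rw [if_neg one_ne_zero]
      have := hc_mul_left (homogeneousComponent_isHomogeneous 1 p) q 1
      rw [show (1+1 : ℕ) = 2 from rfl] at this
      rw [this, h1, mul_zero]
    | 2 =>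
      rw [if_neg (by norm_num)]
      have := hc_mul_left (homogeneousComponent_isHomogeneous 2 p) q 0
      rw [show (2+0 : ℕ) = 2 from rfl] at this
      rw [this, h0, mul_zero]
    | (m+3) =>
      rw [if_neg (by omega)]
      exact hc_mul_left_zero (homogeneousComponent_isHomogeneous (m+3) p) q (by omega)
  simp_rw [hterm]
  rw [Finset.sum_ite_eq' (Finset.range (p.totalDegree + 1)) 0
    (fun j => homogeneousComponent 0 p * homogeneousComponent 2 q)]
  rw [if_pos (by simp)]

lemma mem_D0_iff (f : S3) (s : Fin 3 → S3) :
    s ∈ D0 f ↔ ∑ i : Fin 3, s i * pderiv i f = 0 := Iff.rfl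

lemma R1_mem : R1 ∈ D0 F := by
  rw [mem_D0_iff, Fin.sum_univ_three]; exact hR1
lemma R2_mem : R2 ∈ D0 F := by
  rw [mem_D0_iff, Fin.sum_univ_three]; exact hR2
lemma R3_mem : R3 ∈ D0 F := by
  rw [mem_D0_iff, Fin.sum_univ_three]; exact hR3

lemma hFzne : pderiv 2 F ≠ 0 := by
  rw [hFz]
  exact ne_zero_of_eval _ ![1,1,1] (by simp; norm_num)

lemma span_eq : Submodule.span S3 (Set.range ![R1, R2, R3]) = D0 F := by
  apply le_antisymm
  · rw [Submodule.span_le]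
    rintro - ⟨j, rfl⟩
    fin_cases j
    · exact R1_mem
    · exact R2_mem
    · exact R3_mem
  · intro s hs
    have hE : s 0 * pderiv 0 F + s 1 * pderiv 1 F + s 2 * pderiv 2 F = 0 := by
      have := (mem_D0_iff F s).mp hs
      rwa [Fin.sum_univ_three] at this
    rw [hFx, hFy, hFz] at hE
    obtain ⟨u, q2, q3, h0, h1⟩ := generation (s 0) (s 1) (s 2) hE
    set t : Fin 3 → S3 := u • R1 + q2 • R2 + q3 • R3 with ht
    have htmem : t ∈ D0 F :=
      Submodule.add_mem _ (Submodule.add_mem _ (Submodule.smul_mem _ _ R1_mem)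
        (Submodule.smul_mem _ _ R2_mem)) (Submodule.smul_mem _ _ R3_mem)
    have ht0 : s 0 = t 0 := by
      simpa [ht, Pi.add_apply, Pi.smul_apply, smul_eq_mul] using h0
    have ht1 : s 1 = t 1 := by
      simpa [ht, Pi.add_apply, Pi.smul_apply, smul_eq_mul] using h1
    have ht2 : s 2 = t 2 := by
      have hd : s - t ∈ D0 F := Submodule.sub_mem _ hs htmem
      have hdE : (s-t) 0 * pderiv 0 F + (s-t) 1 * pderiv 1 F + (s-t) 2 * pderiv 2 F = 0 := by
        have := (mem_D0_iff F (s-t)).mp hd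
        rwa [Fin.sum_univ_three] at this
      rw [Pi.sub_apply, Pi.sub_apply, Pi.sub_apply, ← ht0, ← ht1, sub_self, sub_self,
        zero_mul, zero_mul, zero_add, zero_add] at hdE
      have := (mul_eq_zero.mp hdE).resolve_right hFzne
      exact sub_eq_zero.mp this
    have hst : s = t := by
      funext i
      fin_cases i
      · exact ht0
      · exact ht1
      · exact ht2
    rw [hst, ht]
    refine Submodule.add_mem _ (Submodule.add_mem _ ?_ ?_) ?_ <;>
      apply Submodule.smul_mem <;> apply Submodule.subset_span
    · exact ⟨0, rfl⟩
    · exact ⟨1, rfl⟩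
    · exact ⟨2, rfl⟩

lemma hFxhom : (pderiv 0 F).IsHomogeneous 3 := by
  rw [hFx]
  exact ((((three_C_mul (isHomogeneous_X_pow (R := ℂ) 0 2)).mul (hX 1)).add
    ((two_C_mul (hX 0)).mul (isHomogeneous_X_pow (R := ℂ) 1 2))).sub
    ((two_C_mul (hX 0)).mul (isHomogeneous_X_pow (R := ℂ) 2 2))).sub
    ((hX 1).mul (isHomogeneous_X_pow (R := ℂ) 2 2))
lemma hFyhom : (pderiv 1 F).IsHomogeneous 3 := by
  rw [hFy]
  exact ((isHomogeneous_X_pow (R := ℂ) 0 3).add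
    ((two_C_mul (isHomogeneous_X_pow (R := ℂ) 0 2)).mul (hX 1))).sub
    ((hX 0).mul (isHomogeneous_X_pow (R := ℂ) 2 2))
lemma hFzhom : (pderiv 2 F).IsHomogeneous 3 := by
  rw [hFz]
  exact (((two_C_mul (isHomogeneous_X_pow (R := ℂ) 0 2)).mul (hX 2)).neg).sub
    (((two_C_mul (hX 0)).mul (hX 1)).mul (hX 2))

lemma pi_mem_D0 (s : Fin 3 → S3) (hs : s ∈ D0 F) (k : ℕ) :
    (fun i => homogeneousComponent k (s i)) ∈ D0 F := by
  have hE : s 0 * pderiv 0 F + s 1 * pderiv 1 F + s 2 * pderiv 2 F = 0 := by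
    have := (mem_D0_iff F s).mp hs
    rwa [Fin.sum_univ_three] at this
  rw [mem_D0_iff, Fin.sum_univ_three]
  have e0 := hc_mul_left hFxhom (s 0) k
  have e1 := hc_mul_left hFyhom (s 1) k
  have e2 := hc_mul_left hFzhom (s 2) k
  have hE' : pderiv 0 F * s 0 + pderiv 1 F * s 1 + pderiv 2 F * s 2 = 0 := by
    linear_combination hE
  calc homogeneousComponent k (s 0) * pderiv 0 F + homogeneousComponent k (s 1) * pderiv 1 F
        + homogeneousComponent k (s 2) * pderiv 2 F
      = homogeneousComponent (3+k) (pderiv 0 F * s 0)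
        + homogeneousComponent (3+k) (pderiv 1 F * s 1)
        + homogeneousComponent (3+k) (pderiv 2 F * s 2) := by rw [e0, e1, e2]; ring
    _ = homogeneousComponent (3+k)
          (pderiv 0 F * s 0 + pderiv 1 F * s 1 + pderiv 2 F * s 2) := by
        rw [map_add, map_add]
    _ = 0 := by rw [hE', map_zero]


lemma hommem_zero (s : Fin 3 → S3) (hs : s ∈ D0 F)
    (h : ∀ i, (s i).IsHomogeneous 0) : s = 0 := by
  have hE : s 0 * pderiv 0 F + s 1 * pderiv 1 F + s 2 * pderiv 2 F = 0 := by
    have := (mem_D0_iff F s).mp hs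
    rwa [Fin.sum_univ_three] at this
  rw [hFx, hFy, hFz] at hE
  have hsc : ∀ i, sx (s i) = s i := by
    intro i; rw [eq_C_of_isHomogeneous_zero (h i)]; simp [sx]
  have hsz : ∀ i, sz (s i) = s i := by
    intro i; rw [eq_C_of_isHomogeneous_zero (h i)]; simp [sz]
  have h1 := congrArg (⇑sx) hE
  simp only [map_add, map_mul, map_sub, map_neg, map_pow, map_ofNat, map_zero,
    sx_X0, sx_X1, sx_X2, hsc] at h1
  have hEx : s 0 * (X 1 * X 2^2) = 0 := by linear_combination -h1
  have ha : s 0 = 0 :=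
    (mul_eq_zero.mp hEx).resolve_right (ne_zero_of_eval _ ![1,1,1] (by simp))
  have h2 := congrArg (⇑sz) hE
  simp only [map_add, map_mul, map_sub, map_neg, map_pow, map_ofNat, map_zero,
    sz_X0, sz_X1, sz_X2, hsz] at h2
  have hEz : s 1 * (X 0^3 + 2*X 0^2*X 1) = 0 := by
    linear_combination h2 - (3*X 0^2*X 1 + 2*X 0*X 1^2)*ha
  have hb : s 1 = 0 :=
    (mul_eq_zero.mp hEz).resolve_right (ne_zero_of_eval _ ![1,1,1] (by norm_num))
  have hEc : s 2 * (-(2*X 0^2*X 2) - 2*X 0*X 1*X 2) = 0 := by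
    linear_combination hE - (3*X 0^2*X 1 + 2*X 0*X 1^2 - 2*X 0*X 2^2 - X 1*X 2^2)*ha
      - (X 0^3 + 2*X 0^2*X 1 - X 0*X 2^2)*hb
  have hc : s 2 = 0 :=
    (mul_eq_zero.mp hEc).resolve_right (by rw [← hFz]; exact hFzne)
  funext i; fin_cases i <;> assumption

lemma hommem_one (s : Fin 3 → S3) (hs : s ∈ D0 F)
    (h : ∀ i, (s i).IsHomogeneous 1) : s = 0 := by
  have hE : s 0 * pderiv 0 F + s 1 * pderiv 1 F + s 2 * pderiv 2 F = 0 := by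
    have := (mem_D0_iff F s).mp hs
    rwa [Fin.sum_univ_three] at this
  rw [hFx, hFy, hFz] at hE
  have hx0 : (X 0 : S3) ≠ 0 := ne_zero_of_eval _ ![1,1,1] (by simp)
  have hx2 : (X 2 : S3) ≠ 0 := ne_zero_of_eval _ ![1,1,1] (by simp)
  -- s 0 = 0
  have h1 := congrArg (⇑sx) hE
  simp only [map_add, map_mul, map_sub, map_neg, map_pow, map_ofNat, map_zero,
    sx_X0, sx_X1, sx_X2] at h1
  have hEx : sx (s 0) * (X 1 * X 2^2) = 0 := by linear_combination -h1
  have hsxa : sx (s 0) = 0 :=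
    (mul_eq_zero.mp hEx).resolve_right (ne_zero_of_eval _ ![1,1,1] (by simp))
  obtain ⟨a', ha'⟩ : X 0 ∣ s 0 := by
    have := dvd_sub_sx (s 0); rwa [hsxa, sub_zero] at this
  have ha'0 : a' = C (coeff 0 a') := by
    apply eq_C_of_isHomogeneous_zero
    apply isHomogeneous_of_X_mul (i := 0) (n := 0)
    rw [← ha']; exact h 0
  have hsza : sz (s 0) = X 0 * C (coeff 0 a') := by
    rw [ha', map_mul, sz_X0, ← ha'0]
    congr 1
    rw [ha'0]; simp [sz]
  have h2 := congrArg (⇑sz) hE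
  simp only [map_add, map_mul, map_sub, map_neg, map_pow, map_ofNat, map_zero,
    sz_X0, sz_X1, sz_X2] at h2
  have hGbig : X 0^2 * (C (coeff 0 a') * (X 1*(3*X 0+2*X 1)) + sz (s 1) * (X 0+2*X 1)) = 0 := by
    linear_combination h2 - (3*X 0^2*X 1 + 2*X 0*X 1^2)*hsza
  have hG : C (coeff 0 a') * (X 1*(3*X 0+2*X 1)) + sz (s 1) * (X 0+2*X 1) = 0 :=
    (mul_eq_zero.mp hGbig).resolve_left (pow_ne_zero 2 hx0)
  have h3 := congrArg (⇑sx2y) hG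
  simp only [map_add, map_mul, map_sub, map_neg, map_pow, map_ofNat, map_zero,
    MvPolynomial.aeval_C, sx2y_X0, sx2y_X1, sx2y_X2] at h3
  have h3' : (C (coeff 0 a') : S3) * (4*X 1^2) = 0 := by
    rw [show (sx2y (C (coeff 0 a')) : S3) = C (coeff 0 a') from by simp [sx2y]] at h3
    linear_combination -h3
  have hca : (C (coeff 0 a') : S3) = 0 :=
    (mul_eq_zero.mp h3').resolve_right (ne_zero_of_eval _ ![0,1,0] (by simp))
  have ha : s 0 = 0 := by rw [ha', ha'0, hca, mul_zero]
  -- s 1 = 0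
  have hszb : sz (s 1) = 0 := by
    have h4 : sz (s 1) * (X 0+2*X 1) = 0 := by linear_combination hG - (X 1*(3*X 0+2*X 1))*hca
    exact (mul_eq_zero.mp h4).resolve_right (ne_zero_of_eval _ ![1,0,0] (by simp))
  obtain ⟨b₁, hb₁⟩ : X 2 ∣ s 1 := by
    have := dvd_sub_sz (s 1); rwa [hszb, sub_zero] at this
  have hb₁0 : b₁ = C (coeff 0 b₁) := by
    apply eq_C_of_isHomogeneous_zero
    apply isHomogeneous_of_X_mul (i := 2) (n := 0)
    rw [← hb₁]; exact h 1
  have hkey : (X 0*X 2) * (C (coeff 0 b₁) * (X 0^2+2*X 0*X 1-X 2^2) - 2*(s 2)*(X 0+X 1)) = 0 := by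
    linear_combination hE - (3*X 0^2*X 1 + 2*X 0*X 1^2 - 2*X 0*X 2^2 - X 1*X 2^2)*ha
      - (X 0^3 + 2*X 0^2*X 1 - X 0*X 2^2)*hb₁ - (X 2*(X 0^3 + 2*X 0^2*X 1 - X 0*X 2^2))*hb₁0
  have hkey2 : C (coeff 0 b₁) * (X 0^2+2*X 0*X 1-X 2^2) - 2*(s 2)*(X 0+X 1) = 0 :=
    (mul_eq_zero.mp hkey).resolve_left (mul_ne_zero hx0 hx2)
  have h5 := congrArg (⇑sxy) hkey2
  simp only [map_add, map_mul, map_sub, map_neg, map_pow, map_ofNat, map_zero,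
    sxy_X0, sxy_X1, sxy_X2] at h5
  have h5' : (C (coeff 0 b₁) : S3) * (X 0^2 + X 2^2) = 0 := by
    rw [show (sxy (C (coeff 0 b₁)) : S3) = C (coeff 0 b₁) from by simp [sxy]] at h5
    linear_combination -h5
  have hcb : (C (coeff 0 b₁) : S3) = 0 :=
    (mul_eq_zero.mp h5').resolve_right (ne_zero_of_eval _ ![1,1,1] (by norm_num [Matrix.cons_val_two, Matrix.tail_cons, Matrix.head_cons]))
  have hb : s 1 = 0 := by rw [hb₁, hb₁0, hcb, mul_zero]
  -- s 2 = 0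
  have hEc : s 2 * (-(2*X 0^2*X 2) - 2*X 0*X 1*X 2) = 0 := by
    linear_combination hE - (3*X 0^2*X 1 + 2*X 0*X 1^2 - 2*X 0*X 2^2 - X 1*X 2^2)*ha
      - (X 0^3 + 2*X 0^2*X 1 - X 0*X 2^2)*hb
  have hc : s 2 = 0 :=
    (mul_eq_zero.mp hEc).resolve_right (by rw [← hFz]; exact hFzne)
  funext i; fin_cases i <;> assumption

lemma indep (g : Fin 3 → ℂ) (h : g 0 • R1 + g 1 • R2 + g 2 • R3 = 0) : g = 0 := by
  have e0 := congrArg (eval ![1,0,0]) (congrFun h 0)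
  have e1 := congrArg (eval ![1,0,1]) (congrFun h 0)
  have e2 := congrArg (eval ![1,0,1]) (congrFun h 1)
  simp only [Pi.add_apply, Pi.smul_apply, Pi.zero_apply, R1, R2, R3,
    Matrix.cons_val_zero, Matrix.cons_val_one, Matrix.head_cons,
    smul_eval, map_add, map_mul, map_sub, map_neg, map_pow, map_ofNat, map_zero,
    eval_X, Matrix.cons_val_fin_one, Matrix.cons_val_two, Matrix.tail_cons] at e0 e1 e2
  norm_num at e0 e1 e2
  funext k
  fin_cases k
  · exact e0
  · show g 1 = 0; linear_combination (1/2 : ℂ) * e1 - (1/2 : ℂ) * e0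
  · show g 2 = 0; linear_combination (1/2 : ℂ) * e2 + (1/2 : ℂ) * e1 - (1/2 : ℂ) * e0

lemma minimal (n : ℕ) (r' : Fin n → Fin 3 → S3)
    (hspan : Submodule.span S3 (Set.range r') = D0 F) : 3 ≤ n := by
  by_contra hn
  push_neg at hn
  have hr'mem : ∀ j, r' j ∈ D0 F := fun j => hspan ▸ Submodule.subset_span ⟨j, rfl⟩
  have hv0 : ∀ j i, homogeneousComponent 0 (r' j i) = 0 := by
    intro j i
    have := hommem_zero (fun i => homogeneousComponent 0 (r' j i))
      (pi_mem_D0 _ (hr'mem j) 0) (fun i => homogeneousComponent_isHomogeneous 0 _)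
    exact congrFun this i
  have hv1 : ∀ j i, homogeneousComponent 1 (r' j i) = 0 := by
    intro j i
    have := hommem_one (fun i => homogeneousComponent 1 (r' j i))
      (pi_mem_D0 _ (hr'mem j) 1) (fun i => homogeneousComponent_isHomogeneous 1 _)
    exact congrFun this i
  set Rs : Fin 3 → Fin 3 → S3 := ![R1, R2, R3] with hRs
  have hRsmem : ∀ k, Rs k ∈ D0 F := by
    intro k; fin_cases k
    · exact R1_mem
    · exact R2_mem
    · exact R3_mem
  have hRshom : ∀ k i, (Rs k i).IsHomogeneous 2 := by
    intro k; fin_cases k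
    · exact hR1hom
    · exact hR2hom
    · exact hR3hom
  have hrep : ∀ k : Fin 3, ∃ Λ : Fin n → ℂ,
      ∀ i, Rs k i = ∑ j, Λ j • homogeneousComponent 2 (r' j i) := by
    intro k
    have hmem : Rs k ∈ Submodule.span S3 (Set.range r') := by rw [hspan]; exact hRsmem k
    rw [Submodule.mem_span_range_iff_exists_fun] at hmem
    obtain ⟨p, hp⟩ := hmem
    refine ⟨fun j => coeff 0 (p j), fun i => ?_⟩
    calc Rs k i = homogeneousComponent 2 (Rs k i) := by
          rw [homogeneousComponent_of_mem (hRshom k i), if_pos rfl]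
      _ = homogeneousComponent 2 ((∑ j, p j • r' j) i) := by rw [hp]
      _ = homogeneousComponent 2 (∑ j, p j * r' j i) := by
          rw [Finset.sum_apply]; simp only [Pi.smul_apply, smul_eq_mul]
      _ = ∑ j, homogeneousComponent 2 (p j * r' j i) := map_sum _ _ _
      _ = ∑ j, coeff 0 (p j) • homogeneousComponent 2 (r' j i) := by
          refine Finset.sum_congr rfl fun j _ => ?_
          rw [pi2_mul _ _ (hv0 j i) (hv1 j i), homogeneousComponent_zero,
            smul_eq_C_mul]
  choose Λ hΛ using hrep
  have hnli : ¬ LinearIndependent ℂ Λ := by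
    intro hli
    have := hli.fintype_card_le_finrank
    rw [Module.finrank_pi] at this
    simp only [Fintype.card_fin] at this
    omega
  obtain ⟨g, hg0, k0, hk0⟩ := Fintype.not_linearIndependent_iff.mp hnli
  have hji : ∀ j, g 0 * Λ 0 j + g 1 * Λ 1 j + g 2 * Λ 2 j = 0 := by
    intro j
    have := congrFun hg0 j
    simpa [Fin.sum_univ_three] using this
  have hcomb : g 0 • R1 + g 1 • R2 + g 2 • R3 = 0 := by
    funext i
    have c0 := hΛ 0 i
    have c1 := hΛ 1 i
    have c2 := hΛ 2 i
    simp only [hRs, Matrix.cons_val_zero, Matrix.cons_val_one, Matrix.head_cons,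
      Matrix.cons_val_two, Matrix.tail_cons] at c0 c1 c2
    show g 0 • R1 i + g 1 • R2 i + g 2 • R3 i = 0
    rw [c0, c1, c2, Finset.smul_sum, Finset.smul_sum, Finset.smul_sum,
      ← Finset.sum_add_distrib, ← Finset.sum_add_distrib]
    apply Finset.sum_eq_zero
    intro j _
    rw [smul_smul, smul_smul, smul_smul, ← add_smul, ← add_smul, hji j, zero_smul]
  have := indep g hcomb
  rw [this] at hk0
  exact hk0 rfl


end NFaux

/-- **Example 4.1 (iii).** The curve `x(x + y)(xy − z²) = 0` is nearly free with
exponents `(2,2,2)`. -/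
theorem conic_two_lines_nearly_free :
    PlusOneGenExps (X 0 * (X 0 + X 1) * (X 0 * X 1 - X 2 ^ 2)) 2 2 2 := by
  constructor
  · constructor
    · decide
    · refine ⟨![NFaux.R1, NFaux.R2, NFaux.R3], ?_, ?_, ?_, ?_⟩
      · intro j; fin_cases j
        · exact NFaux.R1_mem
        · exact NFaux.R2_mem
        · exact NFaux.R3_mem
      · intro j i; fin_cases j
        · exact NFaux.hR1hom i
        · exact NFaux.hR2hom i
        · exact NFaux.hR3hom i
      · exact NFaux.span_eq
      · exact NFaux.minimal
  · show 2 + 2 = _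
    have h4 : (NFaux.F).IsHomogeneous 4 :=
      ((NFaux.hX 0).mul ((NFaux.hX 0).add (NFaux.hX 1))).mul
        (((NFaux.hX 0).mul (NFaux.hX 1)).sub (isHomogeneous_X_pow (R := ℂ) 2 2))
    have hne : NFaux.F ≠ 0 :=
      NFaux.ne_zero_of_eval _ ![1,1,0] (by simp [NFaux.F])
    rw [show (X 0 * (X 0 + X 1) * (X 0 * X 1 - X 2 ^ 2) : S3).totalDegree = 4 from
      h4.totalDegree hne]
end
end

section
/- Let g ∈ ℂ[x,y] be a reduced polynomial of degree d such that g ∘ φ = u^p − v^q for some polynomial automorphism φ of ℂ² and relatively prime integers p, q ≥ 1. Let f(x,y,z) = z^d g(x/z, y/z) be the homogenization of g and set f' = z·f. Then the affine surface F' : f'(x,y,z) = 1 in ℂ³ (the Milnor fiber of f') is isomorphic, as a complex algebraic variety, to the surface Z₀ = {(u,v,w) ∈ ℂ³ : u^p − v^q + w^{d+1} = 0, w ≠ 0}. -/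
open MvPolynomial Module

noncomputable section

lemma aeval_eq_eval' (s : Fin 2 → ℂ) (h : R2) : aeval s h = eval s h := by
  rw [aeval_eq_eval₂Hom, Algebra.algebraMap_self]; rfl

lemma comp_eval (e : R2 ≃ₐ[ℂ] R2) (h : R2) (s : Fin 2 → ℂ) :
    eval (fun i => eval s (e (X i))) h = eval s (e h) := by
  have h1 : ((aeval s : R2 →ₐ[ℂ] ℂ).comp e.toAlgHom) h
      = aeval (fun i => aeval s (e (X i))) h := by
    conv_lhs => rw [aeval_unique ((aeval s : R2 →ₐ[ℂ] ℂ).comp e.toAlgHom)]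
    rfl
  simp only [AlgHom.comp_apply, AlgEquiv.toAlgHom_eq_coe, AlgHom.coe_coe] at h1
  have h2 := h1.symm
  simp only [aeval_eq_eval'] at h2
  exact h2

lemma eval_homogz (N : ℕ) (h : R2) (hN : h.totalDegree ≤ N) (v : Fin 3 → ℂ) (hv : v 2 ≠ 0) :
    eval v (homogz N h) = v 2 ^ N * eval (fun i : Fin 2 => v i.castSucc / v 2) h := by
  rw [homogz, map_sum, eval_eq', Finset.mul_sum]
  apply Finset.sum_congr rfl
  intro m hm
  have hle : m 0 + m 1 ≤ N := by
    refine le_trans ?_ (le_trans (le_totalDegree hm) hN)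
    rw [Finsupp.sum_fintype _ _ (fun _ => rfl), Fin.sum_univ_two]
  rw [eval_monomial, Finsupp.prod_fintype _ _ (fun _ => pow_zero _)]
  simp only [Finsupp.coe_equivFunOnFinite_symm, Fin.prod_univ_three,
    Fin.prod_univ_two, Matrix.cons_val_zero, Matrix.cons_val_one, Matrix.head_cons,
    Matrix.cons_val_two, Matrix.tail_cons]
  have key : v 2 ^ N * ((v 0 / v 2) ^ m 0 * (v 1 / v 2) ^ m 1)
      = v 0 ^ m 0 * v 1 ^ m 1 * v 2 ^ (N - (m 0 + m 1)) := by
    rw [div_pow, div_pow, ← Nat.sub_add_cancel hle, pow_add, pow_add, Nat.add_sub_cancel]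
    field_simp
  simp only [Fin.castSucc_zero, Fin.castSucc_one]
  rw [← key]
  ring

/-- **Step 1 in the proof of Theorem 1.5.** The Milnor fiber `F' : f' = 1` of
`f' = z·f` is isomorphic, as a complex algebraic variety, to
`Z₀ = {u^p − v^q + w^(d+1) = 0, w ≠ 0}`. -/
theorem milnor_fiber_iso (d p q : ℕ) (g : R2)
    (hgred : Squarefree g) (hdeg : g.totalDegree = d)
    (φ : R2 ≃ₐ[ℂ] R2) (hφ : φ g = X 0 ^ p - X 1 ^ q)
    (hp : 1 ≤ p) (hq : 1 ≤ q) (hpq : Nat.Coprime p q) :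
    IsIsoVar {v : Fin 3 → ℂ | eval v (X 2 * homogz d g) = 1}
      {w : Fin 3 → ℂ | w 0 ^ p - w 1 ^ q + w 2 ^ (d + 1) = 0 ∧ w 2 ≠ 0} := by
  obtain ⟨ζ, hζ⟩ := IsAlgClosed.exists_pow_nat_eq (-1 : ℂ) (Nat.succ_pos d)
  have hζ0 : ζ ≠ 0 := by
    intro h
    rw [h, zero_pow (Nat.succ_ne_zero d)] at hζ
    exact (by norm_num : (0:ℂ) ≠ -1) hζ
  set A := φ.symm (X 0) with hA
  set B := φ.symm (X 1) with hB
  have hg : g = A ^ p - B ^ q := by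
    conv_lhs => rw [← φ.symm_apply_apply g, hφ]
    rw [map_sub, map_pow, map_pow]
  set afp : (Fin 3 → ℂ) → (Fin 2 → ℂ) := fun v i => v i.castSucc / v 2 with hafp
  have hAfact : ∀ v : Fin 3 → ℂ, eval v (X 2 * homogz d g) = 1 →
      v 2 ≠ 0 ∧ v 2 ^ (d+1) * eval (afp v) g = 1 := by
    intro v hv
    rw [map_mul, eval_X] at hv
    have hv2 : v 2 ≠ 0 := left_ne_zero_of_mul_eq_one hv
    refine ⟨hv2, ?_⟩
    rw [eval_homogz d g hdeg.le v hv2] at hv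
    linear_combination hv
  refine ⟨fun v => ![eval (afp v) A, eval (afp v) B, ζ / v 2],
          fun w => ![ζ / w 2 * eval (fun j : Fin 2 => w j.castSucc) (φ (X 0)),
                     ζ / w 2 * eval (fun j : Fin 2 => w j.castSucc) (φ (X 1)),
                     ζ / w 2], ?_, ?_, ?_, ?_, ?_, ?_⟩
  · -- MapsTo F
    intro v hv
    obtain ⟨hv2, h1⟩ := hAfact v hv
    simp only [Set.mem_setOf_eq, Matrix.cons_val_zero, Matrix.cons_val_one, Matrix.head_cons,
      Matrix.cons_val_two, Matrix.tail_cons]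
    refine ⟨?_, div_ne_zero hζ0 hv2⟩
    have hEg : eval (afp v) g = eval (afp v) A ^ p - eval (afp v) B ^ q := by
      rw [hg, map_sub, map_pow, map_pow]
    rw [div_pow, hζ]
    have h2 : v 2 ^ (d+1) ≠ 0 := pow_ne_zero _ hv2
    rw [hEg] at h1
    field_simp
    linear_combination h1
  · -- MapsTo G
    intro w hw
    obtain ⟨hw1, hw2⟩ := hw
    set z := ζ / w 2 with hz'
    have hz : z ≠ 0 := div_ne_zero hζ0 hw2
    set t : Fin 2 → ℂ := fun j => eval (fun j' : Fin 2 => w j'.castSucc) (φ (X j)) with ht'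
    show eval (![z * t 0, z * t 1, z]) (X 2 * homogz d g) = 1
    rw [map_mul, eval_X]
    have hGw2 : (![z * t 0, z * t 1, z] : Fin 3 → ℂ) 2 = z := rfl
    rw [eval_homogz d g hdeg.le _ (by rw [hGw2]; exact hz)]
    have hafpG : (fun i : Fin 2 => (![z * t 0, z * t 1, z] : Fin 3 → ℂ) i.castSucc
        / z) = t := by
      funext j
      fin_cases j <;>
        simp [mul_div_cancel_left₀ _ hz]
    rw [hGw2, hafpG]
    have ht : eval t g = w 0 ^ p - w 1 ^ q := by
      rw [ht']
      rw [comp_eval φ g (fun j' : Fin 2 => w j'.castSucc), hφ]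
      simp only [map_sub, map_pow, eval_X]
      rfl
    rw [ht]
    have hzw : z * w 2 = ζ := div_mul_cancel₀ _ hw2
    have hkey : z ^ (d+1) * w 2 ^ (d+1) = -1 := by rw [← mul_pow, hzw, hζ]
    have hwq : w 0 ^ p - w 1 ^ q = -(w 2 ^ (d+1)) := by linear_combination hw1
    rw [hwq]
    linear_combination -hkey
  · -- regular F
    intro i v hv
    have hv2 := (hAfact v hv).1
    fin_cases i
    · refine ⟨homogz A.totalDegree A, X 2 ^ A.totalDegree, by simp [hv2], ?_⟩
      intro w hw _
      have hw2 := (hAfact w hw).1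
      show (![eval (afp w) A, eval (afp w) B, ζ / w 2] : Fin 3 → ℂ) 0 = _
      rw [map_pow, eval_X, eval_homogz _ A le_rfl w hw2]
      simp only [Matrix.cons_val_zero]
      rw [mul_comm, mul_div_assoc, div_self (pow_ne_zero _ hw2), mul_one]
    · refine ⟨homogz B.totalDegree B, X 2 ^ B.totalDegree, by simp [hv2], ?_⟩
      intro w hw _
      have hw2 := (hAfact w hw).1
      show (![eval (afp w) A, eval (afp w) B, ζ / w 2] : Fin 3 → ℂ) 1 = _
      rw [map_pow, eval_X, eval_homogz _ B le_rfl w hw2]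
      simp only [Matrix.cons_val_one, Matrix.head_cons, Matrix.cons_val_zero]
      rw [mul_comm, mul_div_assoc, div_self (pow_ne_zero _ hw2), mul_one]
    · refine ⟨C ζ, X 2, by simpa using hv2, ?_⟩
      intro w hw _
      have hw2 := (hAfact w hw).1
      show (![eval (afp w) A, eval (afp w) B, ζ / w 2] : Fin 3 → ℂ) 2 = _
      simp
  · -- regular G
    intro i w hw
    obtain ⟨_, hw2⟩ := hw
    fin_cases i
    · refine ⟨C ζ * rename Fin.castSucc (φ (X 0)), X 2, by simpa using hw2, ?_⟩
      intro u hu _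
      obtain ⟨_, hu2⟩ := hu
      show ζ / u 2 * eval (fun j : Fin 2 => u j.castSucc) (φ (X 0)) = _
      rw [map_mul, eval_C, eval_X, eval_rename]
      rw [div_mul_eq_mul_div]
      rfl
    · refine ⟨C ζ * rename Fin.castSucc (φ (X 1)), X 2, by simpa using hw2, ?_⟩
      intro u hu _
      obtain ⟨_, hu2⟩ := hu
      show ζ / u 2 * eval (fun j : Fin 2 => u j.castSucc) (φ (X 1)) = _
      rw [map_mul, eval_C, eval_X, eval_rename]
      rw [div_mul_eq_mul_div]
      rfl
    · refine ⟨C ζ, X 2, by simpa using hw2, ?_⟩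
      intro u hu _
      show ζ / u 2 = _
      simp
  · -- G ∘ F = id
    intro v hv
    obtain ⟨hv2, _⟩ := hAfact v hv
    have hzz : ζ / (ζ / v 2) = v 2 := by
      rw [div_div_eq_mul_div, mul_comm, mul_div_assoc, div_self hζ0, mul_one]
    have hs' : (fun j : Fin 2 =>
        (![eval (afp v) A, eval (afp v) B, ζ / v 2] : Fin 3 → ℂ) j.castSucc)
        = fun j => eval (afp v) (φ.symm (X j)) := by
      funext j
      fin_cases j <;> rfl
    have htj : ∀ j : Fin 2,
        eval (fun j' : Fin 2 => eval (afp v) (φ.symm (X j'))) (φ (X j)) = afp v j := by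
      intro j
      rw [comp_eval φ.symm (φ (X j)) (afp v), φ.symm_apply_apply, eval_X]
    funext i
    fin_cases i
    · show ζ / (ζ / v 2) * eval (fun j : Fin 2 =>
        (![eval (afp v) A, eval (afp v) B, ζ / v 2] : Fin 3 → ℂ) j.castSucc) (φ (X 0)) = v 0
      rw [hs', htj 0, hzz]
      show v 2 * (v 0 / v 2) = v 0
      rw [mul_div_cancel₀ _ hv2]
    · show ζ / (ζ / v 2) * eval (fun j : Fin 2 =>
        (![eval (afp v) A, eval (afp v) B, ζ / v 2] : Fin 3 → ℂ) j.castSucc) (φ (X 1)) = v 1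
      rw [hs', htj 1, hzz]
      show v 2 * (v 1 / v 2) = v 1
      rw [mul_div_cancel₀ _ hv2]
    · show ζ / (ζ / v 2) = v 2
      exact hzz
  · -- F ∘ G = id
    intro w hw
    obtain ⟨hw1, hw2⟩ := hw
    set z := ζ / w 2 with hz'
    have hz : z ≠ 0 := div_ne_zero hζ0 hw2
    set t : Fin 2 → ℂ := fun j => eval (fun j' : Fin 2 => w j'.castSucc) (φ (X j)) with ht'
    have hGw : (fun w' => ![ζ / w' 2 * eval (fun j : Fin 2 => w' j.castSucc) (φ (X 0)),
                     ζ / w' 2 * eval (fun j : Fin 2 => w' j.castSucc) (φ (X 1)),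
                     ζ / w' 2]) w = ![z * t 0, z * t 1, z] := rfl
    have hafpG : afp (![z * t 0, z * t 1, z]) = t := by
      funext j
      fin_cases j <;> simp [hafp, mul_div_cancel_left₀ _ hz]
    have hzz : ζ / z = w 2 := by
      rw [hz', div_div_eq_mul_div, mul_comm, mul_div_assoc, div_self hζ0, mul_one]
    funext i
    fin_cases i
    · show eval (afp (![z * t 0, z * t 1, z])) A = w 0
      rw [hafpG, hA, ht']
      rw [comp_eval φ A (fun j' : Fin 2 => w j'.castSucc), hA, φ.apply_symm_apply, eval_X]
      simp
    · show eval (afp (![z * t 0, z * t 1, z])) B = w 1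
      rw [hafpG, hB, ht']
      rw [comp_eval φ B (fun j' : Fin 2 => w j'.castSucc), hB, φ.apply_symm_apply, eval_X]
      simp
    · show ζ / (![z * t 0, z * t 1, z] : Fin 3 → ℂ) 2 = w 2
      exact hzz
end
end
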